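/- Let a ≤ b be reals, let x ∈ [0,1], and set α = (1−x)·a + x·b and κ = z(a) − 2·z((a+b)/2) + z(b), where z(β) = log Z(β). Then |(z(α) − z(a)) − x·(z(b) − z(a))| ≤ κ. -/

import Mathlib

/-- Partition function of a continuous Gibbs distribution with counts `c`
(finite support): `Z(β) = ∑_x c(x)·e^{βx}`. -/
noncomputable def gibbsZ (c : ℝ → ℝ) (hc : (Function.support c).Finite) (β : ℝ) : ℝ :=
  ∑ x ∈ hc.toFinset, c x * Real.exp (β * x)

/-- Log partition function `z(β) = log Z(β)`. -/
noncomputable def gibbsLogZ (c : ℝ → ℝ) (hc : (Function.support c).Finite) (β : ℝ) : ℝ :=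
  Real.log (gibbsZ c hc β)

lemma gibbsZ_pos (c : ℝ → ℝ) (hc : (Function.support c).Finite)
    (hnonneg : ∀ x, 0 ≤ c x) (hne : c ≠ 0) (β : ℝ) : 0 < gibbsZ c hc β := by
  obtain ⟨x₀, hx₀⟩ : ∃ x, c x ≠ 0 := by
    by_contra h; push_neg at h; exact hne (funext h)
  have hx₀' : x₀ ∈ hc.toFinset := by simp [Function.mem_support, hx₀]
  exact Finset.sum_pos' (fun i _ => mul_nonneg (hnonneg i) (Real.exp_pos _).le)
    ⟨x₀, hx₀', mul_pos ((hnonneg x₀).lt_of_ne (Ne.symm hx₀)) (Real.exp_pos _)⟩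

lemma gibbsZ_holder (c : ℝ → ℝ) (hc : (Function.support c).Finite)
    (hnonneg : ∀ x, 0 ≤ c x) (u v t : ℝ) (ht0 : 0 < t) (ht1 : t < 1) :
    gibbsZ c hc (t * u + (1 - t) * v) ≤
      gibbsZ c hc u ^ t * gibbsZ c hc v ^ (1 - t) := by
  have ht1' : 0 < 1 - t := by linarith
  have hpq : Real.HolderConjugate (1 / t) (1 / (1 - t)) := by
    rw [Real.holderConjugate_iff]; constructor
    · rw [lt_div_iff₀ ht0]; linarith
    · field_simp; ring
  have key := Real.inner_le_Lp_mul_Lq_of_nonneg hc.toFinset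
    (f := fun i => (c i * Real.exp (u * i)) ^ t)
    (g := fun i => (c i * Real.exp (v * i)) ^ (1 - t)) hpq
    (fun i _ => Real.rpow_nonneg (mul_nonneg (hnonneg i) (Real.exp_pos _).le) _)
    (fun i _ => Real.rpow_nonneg (mul_nonneg (hnonneg i) (Real.exp_pos _).le) _)
  have e1 : ∀ i, (c i * Real.exp (u * i)) ^ t * (c i * Real.exp (v * i)) ^ (1 - t)
      = c i * Real.exp ((t * u + (1 - t) * v) * i) := by
    intro i
    have h1 : (0:ℝ) ≤ c i := hnonneg i
    rw [Real.mul_rpow h1 (Real.exp_pos _).le, Real.mul_rpow h1 (Real.exp_pos _).le,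
      ← Real.exp_mul, ← Real.exp_mul]
    have hcc : c i ^ t * c i ^ (1 - t) = c i := by
      rw [← Real.rpow_add' h1 (by norm_num)]
      norm_num
    calc c i ^ t * Real.exp (u * i * t) * (c i ^ (1 - t) * Real.exp (v * i * (1 - t)))
        = (c i ^ t * c i ^ (1 - t)) * (Real.exp (u * i * t) * Real.exp (v * i * (1 - t))) := by
          ring
      _ = c i * Real.exp ((t * u + (1 - t) * v) * i) := by
          rw [hcc, ← Real.exp_add]; ring_nf
  have e2 : ∀ (i w s : ℝ), s ≠ 0 → ((c i * Real.exp (w * i)) ^ s) ^ (1 / s : ℝ)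
      = c i * Real.exp (w * i) := by
    intro i w s hs
    rw [← Real.rpow_mul (mul_nonneg (hnonneg i) (Real.exp_pos _).le),
      mul_one_div_cancel hs, Real.rpow_one]
  simp only [e1, e2 _ _ _ ht0.ne', e2 _ _ _ ht1'.ne', one_div_one_div] at key
  simpa [gibbsZ] using key

lemma gibbsLogZ_convexOn (c : ℝ → ℝ) (hc : (Function.support c).Finite)
    (hnonneg : ∀ x, 0 ≤ c x) (hne : c ≠ 0) (u v t : ℝ) (ht0 : 0 ≤ t) (ht1 : t ≤ 1) :
    gibbsLogZ c hc (t * u + (1 - t) * v) ≤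
      t * gibbsLogZ c hc u + (1 - t) * gibbsLogZ c hc v := by
  rcases eq_or_lt_of_le ht0 with h0 | h0
  · simp [← h0]
  rcases eq_or_lt_of_le ht1 with h1 | h1
  · subst h1; norm_num
  have hZu := gibbsZ_pos c hc hnonneg hne u
  have hZv := gibbsZ_pos c hc hnonneg hne v
  have := gibbsZ_holder c hc hnonneg u v t h0 h1
  have hlog := Real.log_le_log (gibbsZ_pos c hc hnonneg hne (t * u + (1 - t) * v)) this
  rwa [Real.log_mul (Real.rpow_pos_of_pos hZu t).ne' (Real.rpow_pos_of_pos hZv (1 - t)).ne',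
    Real.log_rpow hZu, Real.log_rpow hZv] at hlog

/-- Let `a ≤ b`, `x ∈ [0,1]`, `α = (1−x)·a + x·b` and
`κ = z(a) − 2·z((a+b)/2) + z(b)`.  Then
`|(z(α) − z(a)) − x·(z(b) − z(a))| ≤ κ`. -/
theorem stmt_7 (n : ℝ) (hn : 1 ≤ n) (c : ℝ → ℝ) (hc : (Function.support c).Finite)
    (hsupp : Function.support c ⊆ {0} ∪ Set.Icc 1 n)
    (hnonneg : ∀ x, 0 ≤ c x) (hne : c ≠ 0)
    (a b : ℝ) (hab : a ≤ b) (x : ℝ) (hx : x ∈ Set.Icc (0 : ℝ) 1) :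
    |(gibbsLogZ c hc ((1 - x) * a + x * b) - gibbsLogZ c hc a)
        - x * (gibbsLogZ c hc b - gibbsLogZ c hc a)| ≤
      gibbsLogZ c hc a - 2 * gibbsLogZ c hc ((a + b) / 2) + gibbsLogZ c hc b := by
  obtain ⟨hx0, hx1⟩ := hx
  set z : ℝ → ℝ := gibbsLogZ c hc with hz
  set A := z a
  set B := z b
  set M := z ((a + b) / 2)
  set G := z ((1 - x) * a + x * b)
  have conv := gibbsLogZ_convexOn c hc hnonneg hne
  -- fact 1 : G ≤ (1-x)A + xB
  have h1 : G ≤ (1 - x) * A + x * B := by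
    have := conv a b (1 - x) (by linarith) (by linarith)
    have e : (1 - x) * a + (1 - (1 - x)) * b = (1 - x) * a + x * b := by ring
    rw [e] at this
    have e2 : (1 - (1 - x)) = x := by ring
    rw [e2] at this
    exact this
  -- fact 2 : 2M ≤ A + B
  have h2 : 2 * M ≤ A + B := by
    have := conv a b (1/2) (by norm_num) (by norm_num)
    have e : (1/2 : ℝ) * a + (1 - 1/2) * b = (a + b) / 2 := by ring
    rw [e] at this
    linarith
  rw [abs_le]
  constructor
  · -- lower bound: G - A - x(B - A) ≥ -(A - 2M + B)
    rcases le_or_gt x (1/2) with hhalf | hhalf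
    · have hpos : (0:ℝ) < 2 * (1 - x) := by linarith
      set t : ℝ := 1 / (2 * (1 - x)) with ht
      have ht0 : 0 < t := by positivity
      have ht1 : t ≤ 1 := by
        rw [ht, div_le_one hpos]; linarith
      have h3 := conv ((1 - x) * a + x * b) b t ht0.le ht1
      have e : t * ((1 - x) * a + x * b) + (1 - t) * b = (a + b) / 2 := by
        rw [ht]; field_simp [(by linarith : (0:ℝ) < 1 - x).ne']; ring
      rw [e] at h3
      -- multiply by 2(1-x)
      have key := mul_le_mul_of_nonneg_left h3 hpos.le
      have htt : 2 * (1 - x) * t = 1 := by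
        rw [ht]; exact mul_one_div_cancel hpos.ne'
      have e2 : 2 * (1 - x) * (t * G + (1 - t) * B) = G + (1 - 2 * x) * B := by
        linear_combination (G - B) * htt
      rw [e2] at key
      -- key : 2(1-x) M ≤ G + (1-2x) B
      nlinarith [mul_nonneg hx0 (by linarith : (0:ℝ) ≤ A + B - 2 * M)]
    · have hpos : (0:ℝ) < 2 * x := by linarith
      set t : ℝ := 1 - 1 / (2 * x) with ht
      have ht0 : 0 ≤ t := by
        rw [ht, sub_nonneg, div_le_one hpos]; linarith
      have ht1 : t ≤ 1 := by
        rw [ht]; have : 0 < 1 / (2 * x) := by positivity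
        linarith
      have h3 := conv a ((1 - x) * a + x * b) t ht0 ht1
      have e : t * a + (1 - t) * ((1 - x) * a + x * b) = (a + b) / 2 := by
        rw [ht]; field_simp; ring
      rw [e] at h3
      have key := mul_le_mul_of_nonneg_left h3 hpos.le
      have htx : 1 - t = 1 / (2 * x) := by rw [ht]; ring
      have htt : 2 * x * (1 - t) = 1 := by
        rw [htx]; exact mul_one_div_cancel hpos.ne'
      have e2 : 2 * x * (t * A + (1 - t) * G) = (2 * x - 1) * A + G := by
        linear_combination (G - A) * htt
      rw [e2] at key
      -- key : 2x M ≤ (2x-1) A + G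
      nlinarith [mul_nonneg (by linarith : (0:ℝ) ≤ 1 - x)
        (by linarith : (0:ℝ) ≤ A + B - 2 * M)]
  · -- upper bound
    nlinarith
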